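/- Let u, v be real numbers with v ≠ 0, and set s₁ := √((u−1)² + v²), s₂ := √(u² + v²). Let Q₁ = (0,0), Q₂ = (1,0), Q₃ = (u,v), and define E(x,y) := v²x² + (u² + (s₁ − s₂ − 1)u + s₂)y² + v(1 − s₁ + s₂ − 2u)xy + v(u − s₂)y − v²x. Let the anticomplementary triangle (ACT) have vertices Q₁′ = (u−1, v), Q₂′ = (u+1, v), Q₃′ = (1−u, −v), and let X₁′ be the incenter of the ACT. Then E vanishes at Q₁, Q₂, Q₃, and E also vanishes at each of the three orthogonal projections of X₁′ onto the three side lines of the ACT (the intouchpoints of the ACT). -/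

import Mathlib

noncomputable section

/-- The standard inner product on `ℝ²`. -/
def dot (p q : ℝ × ℝ) : ℝ := p.1 * q.1 + p.2 * q.2

/-- The Euclidean length of a vector of `ℝ²`. -/
def elen (p : ℝ × ℝ) : ℝ := Real.sqrt (dot p p)

/-- The orthogonal projection of the point `P` onto the line through `A` and `B`. -/
def projLine (P A B : ℝ × ℝ) : ℝ × ℝ :=
  A + (dot (P - A) (B - A) / dot (B - A) (B - A)) • (B - A)

/-- The incenter of the triangle `V₁V₂V₃`: the weighted average of the vertices,
each weighted by the length of the opposite side. -/
def incenter (V₁ V₂ V₃ : ℝ × ℝ) : ℝ × ℝ :=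
  (elen (V₂ - V₃) + elen (V₁ - V₃) + elen (V₁ - V₂))⁻¹ •
    (elen (V₂ - V₃) • V₁ + elen (V₁ - V₃) • V₂ + elen (V₁ - V₂) • V₃)

/-- The circumbilliard `E = 0` of the triangle `Q₁ = (0,0)`, `Q₂ = (1,0)`,
`Q₃ = (u,v)` passes through the three vertices and also through the three
intouchpoints of the anticomplementary triangle `Q₁′Q₂′Q₃′` (the orthogonal
projections of the ACT's incenter `X₁′` onto the ACT's three side lines). -/
theorem stmt_4 (u v : ℝ) (hv : v ≠ 0) (s₁ s₂ : ℝ)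
    (hs₁ : s₁ = Real.sqrt ((u - 1) ^ 2 + v ^ 2))
    (hs₂ : s₂ = Real.sqrt (u ^ 2 + v ^ 2))
    (E : ℝ → ℝ → ℝ)
    (hE : ∀ x y : ℝ, E x y =
      v ^ 2 * x ^ 2 + (u ^ 2 + (s₁ - s₂ - 1) * u + s₂) * y ^ 2 +
      v * (1 - s₁ + s₂ - 2 * u) * x * y + v * (u - s₂) * y - v ^ 2 * x)
    (Q₁ Q₂ Q₃ Q₁' Q₂' Q₃' X₁' : ℝ × ℝ)
    (hQ₁ : Q₁ = (0, 0)) (hQ₂ : Q₂ = (1, 0)) (hQ₃ : Q₃ = (u, v))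
    (hQ₁' : Q₁' = (u - 1, v)) (hQ₂' : Q₂' = (u + 1, v)) (hQ₃' : Q₃' = (1 - u, -v))
    (hX₁' : X₁' = incenter Q₁' Q₂' Q₃') :
    E Q₁.1 Q₁.2 = 0 ∧ E Q₂.1 Q₂.2 = 0 ∧ E Q₃.1 Q₃.2 = 0 ∧
    E (projLine X₁' Q₂' Q₃').1 (projLine X₁' Q₂' Q₃').2 = 0 ∧
    E (projLine X₁' Q₃' Q₁').1 (projLine X₁' Q₃' Q₁').2 = 0 ∧
    E (projLine X₁' Q₁' Q₂').1 (projLine X₁' Q₁' Q₂').2 = 0 := by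
  subst hQ₁ hQ₂ hQ₃ hQ₁' hQ₂' hQ₃'
  have hv2 : 0 < v ^ 2 := by positivity
  have h1 : s₁ ^ 2 = (u - 1) ^ 2 + v ^ 2 := by
    rw [hs₁, Real.sq_sqrt (by positivity)]
  have h2 : s₂ ^ 2 = u ^ 2 + v ^ 2 := by
    rw [hs₂, Real.sq_sqrt (by positivity)]
  have hs₁0 : 0 ≤ s₁ := hs₁ ▸ Real.sqrt_nonneg _
  have hs₂0 : 0 ≤ s₂ := hs₂ ▸ Real.sqrt_nonneg _
  have hs₁p : 0 < s₁ := by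
    rcases lt_or_eq_of_le hs₁0 with h | h
    · exact h
    · exfalso; nlinarith [h1]
  have hs₂p : 0 < s₂ := by
    rcases lt_or_eq_of_le hs₂0 with h | h
    · exact h
    · exfalso; nlinarith [h2]
  have hpne : s₁ + s₂ + 1 ≠ 0 := by positivity
  have hs₁ne : s₁ ≠ 0 := ne_of_gt hs₁p
  have hs₂ne : s₂ ≠ 0 := ne_of_gt hs₂p
  have hsq4 : Real.sqrt 4 = 2 := by
    rw [show (4:ℝ) = 2 ^ 2 by norm_num, Real.sqrt_sq (by norm_num)]
  have e1 : elen (((u+1, v) : ℝ × ℝ) - (1-u, -v)) = 2 * s₂ := by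
    simp only [elen, dot, Prod.fst_sub, Prod.snd_sub]
    rw [show (u+1-(1-u)) * (u+1-(1-u)) + (v - -v) * (v - -v) = 4 * (u^2+v^2) by ring,
      Real.sqrt_mul (by norm_num), hsq4, hs₂]
  have e2 : elen (((u-1, v) : ℝ × ℝ) - (1-u, -v)) = 2 * s₁ := by
    simp only [elen, dot, Prod.fst_sub, Prod.snd_sub]
    rw [show (u-1-(1-u)) * (u-1-(1-u)) + (v - -v) * (v - -v) = 4 * ((u-1)^2+v^2) by ring,
      Real.sqrt_mul (by norm_num), hsq4, hs₁]
  have e3 : elen (((u-1, v) : ℝ × ℝ) - (u+1, v)) = 2 := by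
    simp only [elen, dot, Prod.fst_sub, Prod.snd_sub]
    rw [show (u-1-(u+1)) * (u-1-(u+1)) + (v - v) * (v - v) = 4 by ring, hsq4]
  have hX : X₁' = ((s₂*(u-1) + s₁*(u+1) + (1-u)) / (s₁+s₂+1),
      (s₂ + s₁ - 1) * v / (s₁+s₂+1)) := by
    rw [hX₁', incenter, e1, e2, e3]
    ext <;> simp [Prod.smul_fst, Prod.smul_snd, smul_eq_mul] <;>
      field_simp <;> ring
  have hT1 : projLine X₁' (u+1, v) (1-u, -v) = ((s₂ + u*(s₁-1))/s₂, v*(s₁-1)/s₂) := by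
    rw [hX, projLine]
    simp only [dot, Prod.mk_sub_mk, Prod.smul_mk, smul_eq_mul, Prod.mk_add_mk, Prod.mk.injEq]
    rw [show (1 - u - (u + 1)) * (1 - u - (u + 1)) + (-v - v) * (-v - v) = 4 * s₂ ^ 2 from by
      linear_combination (-4 : ℝ)*h2]
    constructor
    · field_simp
      linear_combination (-4*u*s₂) * h1 + (4*u*s₂ + 8*u) * h2
    · field_simp
      linear_combination (-4*s₂) * h1 + (8 + 4*s₂) * h2
  have hT2 : projLine X₁' (1-u, -v) (u-1, v) = ((u-1)*(s₂-1)/s₁, v*(s₂-1)/s₁) := by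
    rw [hX, projLine]
    simp only [dot, Prod.mk_sub_mk, Prod.smul_mk, smul_eq_mul, Prod.mk_add_mk, Prod.mk.injEq]
    rw [show (u - 1 - (1 - u)) * (u - 1 - (1 - u)) + (v - -v) * (v - -v) = 4 * s₁ ^ 2 from by
      linear_combination (-4 : ℝ)*h1]
    constructor
    · field_simp
      linear_combination (8*s₂ + 4*s₁ - 8*u*s₂ - 4*u*s₁) * h1 + (4*s₁ - 4*u*s₁) * h2
    · field_simp
      linear_combination (-8*s₂ - 4*s₁) * h1 + (-4*s₁) * h2
  have hT3 : projLine X₁' (u-1, v) (u+1, v) = (u + s₁ - s₂, v) := by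
    rw [hX, projLine]
    simp only [dot, Prod.mk_sub_mk, Prod.smul_mk, smul_eq_mul, Prod.mk_add_mk, Prod.mk.injEq]
    constructor
    · field_simp
      linear_combination (-4 : ℝ) * h1 + (4 : ℝ) * h2
    · field_simp
      ring
  refine ⟨?_, ?_, ?_, ?_, ?_, ?_⟩
  · rw [hE]; norm_num
  · rw [hE]; norm_num
  · rw [hE]; ring
  · rw [hT1]; rw [hE]; field_simp; ring
  · rw [hT2]; rw [hE]; field_simp; ring
  · rw [hT3]; rw [hE]; ring
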